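/- Let α > 1, let P, Q be probability measures on a measurable space X, and let κ, η be Markov kernels from X to a measurable space Y. Then the Rényi divergence of order α between the composed joint measures satisfies D_α(P ⊗ₘ κ ‖ Q ⊗ₘ η) ≥ D_α(P ‖ Q), where P ⊗ₘ κ denotes the measure on X×Y defined by (P ⊗ₘ κ)(A×B) = ∫_A κ(x)(B) dP(x). -/

import Mathlib

open MeasureTheory ProbabilityTheory ENNReal

/-- Jensen-type inequality for `rpow` with exponent `α ≥ 1` via Hölder. -/
lemma jensen_rpow_aux {Y : Type*} [MeasurableSpace Y] (μ : Measure Y) [IsProbabilityMeasure μ]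
    {f : Y → ℝ≥0∞} (hf : Measurable f) {α : ℝ} (hα : 1 < α) :
    (∫⁻ y, f y ∂μ) ^ α ≤ ∫⁻ y, f y ^ α ∂μ := by
  have hpq : α.HolderConjugate (α / (α - 1)) := Real.HolderConjugate.conjExponent hα
  have h := ENNReal.lintegral_mul_le_Lp_mul_Lq μ hpq hf.aemeasurable
    (aemeasurable_const (b := (1 : ℝ≥0∞)))
  simp only [Pi.mul_apply, mul_one, ENNReal.one_rpow, lintegral_const, measure_univ,
    one_mul] at h
  calc (∫⁻ y, f y ∂μ) ^ α ≤ ((∫⁻ y, f y ^ α ∂μ) ^ (1 / α)) ^ α := by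
        exact ENNReal.rpow_le_rpow h (le_of_lt (lt_trans one_pos hα))
    _ = ∫⁻ y, f y ^ α ∂μ := by
        rw [← ENNReal.rpow_mul, one_div, inv_mul_cancel₀ (ne_of_gt (lt_trans one_pos hα)),
          ENNReal.rpow_one]

open Classical in
/-- The Rényi divergence of order `α` between two measures: `(α-1)⁻¹ log ∫ (dP/dQ)^α dQ`
when `P ≪ Q`, and `⊤` otherwise. -/
noncomputable def renyiDiv {X : Type*} [MeasurableSpace X] (α : ℝ) (P Q : Measure X) : EReal :=
  if P ≪ Q then ((α - 1)⁻¹ : ℝ) * ENNReal.log (∫⁻ x, (P.rnDeriv Q x) ^ α ∂Q) else ⊤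
/-- Rényi divergence between the joint measures `P ⊗ₘ κ` and `Q ⊗ₘ η` is at least the Rényi
divergence between the marginals `P` and `Q`. -/
theorem renyiDiv_compProd_ge {X Y : Type*} [MeasurableSpace X] [MeasurableSpace Y]
    (α : ℝ) (hα : 1 < α)
    (P Q : Measure X) [IsProbabilityMeasure P] [IsProbabilityMeasure Q]
    (κ η : Kernel X Y) [IsMarkovKernel κ] [IsMarkovKernel η] :
    renyiDiv α P Q ≤ renyiDiv α (P ⊗ₘ κ) (Q ⊗ₘ η) := by
  classical
  by_cases h : (P ⊗ₘ κ) ≪ (Q ⊗ₘ η)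
  swap
  · simp only [renyiDiv]
    rw [if_neg h]; exact le_top
  have hκ0 : ∀ a, NeZero (κ a) := fun a => ⟨IsProbabilityMeasure.ne_zero _⟩
  have hPQ : P ≪ Q := Measure.absolutelyContinuous_of_compProd h
  rw [renyiDiv, renyiDiv, if_pos hPQ, if_pos h]
  set g : X × Y → ℝ≥0∞ := (P ⊗ₘ κ).rnDeriv (Q ⊗ₘ η) with hg_def
  have hg : Measurable g := Measure.measurable_rnDeriv _ _
  -- the marginal identity
  have hmarg : (fun x => P.rnDeriv Q x) =ᵐ[Q] fun x => ∫⁻ y, g (x, y) ∂(η x) := by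
    refine ae_eq_of_forall_setLIntegral_eq_of_sigmaFinite (Measure.measurable_rnDeriv _ _)
      (hg.lintegral_kernel_prod_right') (fun s hs _ => ?_)
    rw [Measure.setLIntegral_rnDeriv hPQ s]
    have h1 : ∫⁻ x in s, ∫⁻ y, g (x, y) ∂(η x) ∂Q = ∫⁻ z in s ×ˢ Set.univ, g z ∂(Q ⊗ₘ η) := by
      rw [Measure.setLIntegral_compProd hg hs MeasurableSet.univ]
      simp [Measure.restrict_univ]
    rw [h1, Measure.setLIntegral_rnDeriv h (s ×ˢ Set.univ),
      Measure.compProd_apply_prod hs MeasurableSet.univ]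
    simp [measure_univ]
  -- the main integral inequality
  have key : ∫⁻ x, (P.rnDeriv Q x) ^ α ∂Q ≤ ∫⁻ z, g z ^ α ∂(Q ⊗ₘ η) := by
    calc ∫⁻ x, (P.rnDeriv Q x) ^ α ∂Q
        = ∫⁻ x, (∫⁻ y, g (x, y) ∂(η x)) ^ α ∂Q := by
          refine lintegral_congr_ae ?_
          filter_upwards [hmarg] with x hx using by rw [hx]
      _ ≤ ∫⁻ x, ∫⁻ y, g (x, y) ^ α ∂(η x) ∂Q := by
          refine lintegral_mono fun x => ?_
          exact jensen_rpow_aux (η x) (hg.comp measurable_prodMk_left) hα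
      _ = ∫⁻ z, g z ^ α ∂(Q ⊗ₘ η) := by
          rw [Measure.lintegral_compProd (hg.pow_const α)]
  -- conclude
  have hlog : ENNReal.log (∫⁻ x, (P.rnDeriv Q x) ^ α ∂Q)
      ≤ ENNReal.log (∫⁻ z, g z ^ α ∂(Q ⊗ₘ η)) := ENNReal.log_monotone key
  have hc : (0 : EReal) ≤ ((α - 1)⁻¹ : ℝ) := by
    have : (0:ℝ) ≤ (α - 1)⁻¹ := inv_nonneg.mpr (by linarith)
    exact_mod_cast this
  calc ((α - 1)⁻¹ : ℝ) * ENNReal.log (∫⁻ x, (P.rnDeriv Q x) ^ α ∂Q)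
      = ENNReal.log (∫⁻ x, (P.rnDeriv Q x) ^ α ∂Q) * ((α - 1)⁻¹ : ℝ) := mul_comm _ _
    _ ≤ ENNReal.log (∫⁻ z, g z ^ α ∂(Q ⊗ₘ η)) * ((α - 1)⁻¹ : ℝ) :=
        mul_le_mul_of_nonneg_right hlog hc
    _ = ((α - 1)⁻¹ : ℝ) * ENNReal.log (∫⁻ z, g z ^ α ∂(Q ⊗ₘ η)) := mul_comm _ _
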